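/- Second system of q-difference equations for F (equation (12), with operator ordering made explicit): let q, a_1,…,a_N, b_1,…,b_M, c_1,…,c_N be complex numbers, |q| < 1, with (c_j;q)_n ≠ 0 for all j, n, and let G(y) = F_{N,M}({a_j},{b_i};{c_j};y) for y in the open unit polydisc in ℂ^M, where the defining multi-series is assumed absolutely summable on this polydisc. For 1 ≤ r < s ≤ M and every y in the polydisc: y_r · [(1 − b_r T_{y_r}) ∘ (1 − T_{y_s})] applied to G, evaluated at y, equals y_s · [(1 − b_s T_{y_s}) ∘ (1 − T_{y_r})] applied to G, evaluated at y, where T_{y_i} replaces y_i by q y_i. -/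

import Mathlib

open scoped BigOperators

noncomputable def qPoch (q a : ℂ) (n : ℕ) : ℂ :=
  ∏ k ∈ Finset.range n, (1 - q ^ k * a)

noncomputable def qPochInf (q a : ℂ) : ℂ :=
  ∏' k : ℕ, (1 - q ^ k * a)

/-- The generalized `q`-hypergeometric series `F_{N,M}` with upper parameters `a`,
`b`-type parameters `b`, lower parameters `c` and variables `y`. -/
noncomputable def qHyperF (q : ℂ) {N M : ℕ} (a : Fin N → ℂ) (b : Fin M → ℂ)
    (c : Fin N → ℂ) (y : Fin M → ℂ) : ℂ :=
  ∑' m : Fin M → ℕ,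
    (∏ j, qPoch q (a j) (∑ i, m i) / qPoch q (c j) (∑ i, m i)) *
      (∏ i, qPoch q (b i) (m i) / qPoch q q (m i)) * ∏ i, y i ^ m i


/-- `T_{y_s}` : the `q`-shift operator in the variable `y_s` only. -/
noncomputable def qShiftAt (q : ℂ) {M : ℕ} (s : Fin M) (f : (Fin M → ℂ) → ℂ) :
    (Fin M → ℂ) → ℂ :=
  fun y => f (Function.update y s (q * y s))

/-- The operator `1 - α T_{y_s}`. -/
noncomputable def opAt (q α : ℂ) {M : ℕ} (s : Fin M) (f : (Fin M → ℂ) → ℂ) :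
    (Fin M → ℂ) → ℂ :=
  fun y => f y - α * qShiftAt q s f y

/-- The general term of the multi-series defining `qHyperF`. -/
noncomputable def qTerm (q : ℂ) {N M : ℕ} (a : Fin N → ℂ) (b : Fin M → ℂ)
    (c : Fin N → ℂ) (y : Fin M → ℂ) (m : Fin M → ℕ) : ℂ :=
  (∏ j, qPoch q (a j) (∑ i, m i) / qPoch q (c j) (∑ i, m i)) *
    (∏ i, qPoch q (b i) (m i) / qPoch q q (m i)) * ∏ i, y i ^ m i

lemma qHyperF_eq_tsum_qTerm (q : ℂ) {N M : ℕ} (a : Fin N → ℂ) (b : Fin M → ℂ)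
    (c : Fin N → ℂ) (y : Fin M → ℂ) :
    qHyperF q a b c y = ∑' m, qTerm q a b c y m := rfl

lemma qPoch_succ (q x : ℂ) (n : ℕ) :
    qPoch q x (n + 1) = qPoch q x n * (1 - q ^ n * x) :=
  Finset.prod_range_succ _ _

lemma prod_pow_qupdate {M : ℕ} (q : ℂ) (z : Fin M → ℂ) (s : Fin M) (m : Fin M → ℕ) :
    ∏ i, (Function.update z s (q * z s)) i ^ m i = q ^ m s * ∏ i, z i ^ m i := by
  classical
  have h1 : (fun i => (Function.update z s (q * z s)) i ^ m i)
      = Function.update (fun i => z i ^ m i) s ((q * z s) ^ m s) := by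
    funext i
    rcases eq_or_ne i s with rfl | h
    · simp
    · simp [Function.update_of_ne h]
  rw [h1, Finset.prod_update_of_mem (Finset.mem_univ s),
    ← Finset.mul_prod_erase Finset.univ (fun i => z i ^ m i) (Finset.mem_univ s),
    Finset.erase_eq, mul_pow]
  ring

lemma qTerm_update (q : ℂ) {N M : ℕ} (a : Fin N → ℂ) (b : Fin M → ℂ)
    (c : Fin N → ℂ) (z : Fin M → ℂ) (s : Fin M) (m : Fin M → ℕ) :
    qTerm q a b c (Function.update z s (q * z s)) m = q ^ m s * qTerm q a b c z m := by
  unfold qTerm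
  rw [prod_pow_qupdate]
  ring

lemma one_sub_q_pow_succ_ne_zero (q : ℂ) (hq : ‖q‖ < 1) (k : ℕ) :
    (1 : ℂ) - q ^ k * q ≠ 0 := by
  have habs : ‖q ^ k * q‖ < 1 := by
    rw [norm_mul, norm_pow]
    calc ‖q‖ ^ k * ‖q‖ ≤ 1 * ‖q‖ := by
          gcongr
          exact pow_le_one₀ (norm_nonneg q) hq.le
      _ = ‖q‖ := one_mul _
      _ < 1 := hq
  intro h
  have : q ^ k * q = 1 := by linear_combination -h
  rw [this] at habs
  simp at habs

/-- Key contiguous relation: shifting `m_s ↦ m_s + 1`. -/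
lemma qTerm_succ (q : ℂ) {N M : ℕ} (a : Fin N → ℂ) (b : Fin M → ℂ)
    (c : Fin N → ℂ) (y : Fin M → ℂ) (hq : ‖q‖ < 1)
    (s : Fin M) (m : Fin M → ℕ) :
    qTerm q a b c y (Function.update m s (m s + 1)) * (1 - q ^ m s * q)
      = qTerm q a b c y m * (y s * (1 - q ^ m s * b s) *
          ∏ j, (1 - q ^ (∑ i, m i) * a j) / (1 - q ^ (∑ i, m i) * c j)) := by
  classical
  have hsum' : (∑ i, Function.update m s (m s + 1) i) = (∑ i, m i) + 1 := by
    rw [Finset.sum_update_of_mem (Finset.mem_univ s),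
      ← Finset.add_sum_erase Finset.univ m (Finset.mem_univ s), Finset.erase_eq]
    ring
  have hA : (∏ j, qPoch q (a j) ((∑ i, m i) + 1) / qPoch q (c j) ((∑ i, m i) + 1))
      = (∏ j, qPoch q (a j) (∑ i, m i) / qPoch q (c j) (∑ i, m i)) *
        ∏ j, (1 - q ^ (∑ i, m i) * a j) / (1 - q ^ (∑ i, m i) * c j) := by
    rw [← Finset.prod_mul_distrib]
    refine Finset.prod_congr rfl fun j _ => ?_
    rw [qPoch_succ, qPoch_succ, mul_div_mul_comm]
  have hY : (∏ i, y i ^ Function.update m s (m s + 1) i) = y s * ∏ i, y i ^ m i := by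
    have h1 : (fun i => y i ^ Function.update m s (m s + 1) i)
        = Function.update (fun i => y i ^ m i) s (y s ^ (m s + 1)) := by
      funext i
      rcases eq_or_ne i s with rfl | h
      · simp
      · simp [Function.update_of_ne h]
    rw [h1, Finset.prod_update_of_mem (Finset.mem_univ s),
      ← Finset.mul_prod_erase Finset.univ (fun i => y i ^ m i) (Finset.mem_univ s),
      Finset.erase_eq, pow_succ]
    ring
  have hB : (∏ i, qPoch q (b i) (Function.update m s (m s + 1) i) /
        qPoch q q (Function.update m s (m s + 1) i)) * (1 - q ^ m s * q)
      = (∏ i, qPoch q (b i) (m i) / qPoch q q (m i)) * (1 - q ^ m s * b s) := by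
    have h1 : (fun i => qPoch q (b i) (Function.update m s (m s + 1) i) /
          qPoch q q (Function.update m s (m s + 1) i))
        = Function.update (fun i => qPoch q (b i) (m i) / qPoch q q (m i)) s
            (qPoch q (b s) (m s + 1) / qPoch q q (m s + 1)) := by
      funext i
      rcases eq_or_ne i s with rfl | h
      · simp
      · simp [Function.update_of_ne h]
    rw [h1, Finset.prod_update_of_mem (Finset.mem_univ s),
      ← Finset.mul_prod_erase Finset.univ
        (fun i => qPoch q (b i) (m i) / qPoch q q (m i)) (Finset.mem_univ s)]
    rw [qPoch_succ, qPoch_succ, mul_div_mul_comm, Finset.erase_eq]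
    have hne : (1 : ℂ) - q ^ m s * q ≠ 0 := one_sub_q_pow_succ_ne_zero q hq (m s)
    have hcan : (1 - q ^ m s * b s) / (1 - q ^ m s * q) * (1 - q ^ m s * q)
        = 1 - q ^ m s * b s := div_mul_cancel₀ _ hne
    linear_combination (qPoch q (b s) (m s) / qPoch q q (m s) *
      ∏ x ∈ Finset.univ \ {s}, (qPoch q (b x) (m x) / qPoch q q (m x))) * hcan
  unfold qTerm
  rw [hsum', hA, hY]
  linear_combination ((∏ j, qPoch q (a j) (∑ i, m i) / qPoch q (c j) (∑ i, m i)) *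
    (∏ j, (1 - q ^ (∑ i, m i) * a j) / (1 - q ^ (∑ i, m i) * c j)) *
    (y s) * (∏ i, y i ^ m i)) * hB

lemma update_succ_injective {M : ℕ} (s : Fin M) :
    Function.Injective (fun m : Fin M → ℕ => Function.update m s (m s + 1)) := by
  intro m1 m2 h
  funext i
  have hi := congrFun h i
  rcases eq_or_ne i s with rfl | hne
  · simp only [Function.update_self] at hi
    omega
  · simpa [Function.update_of_ne hne] using hi

theorem statement5 (M N : ℕ) (q : ℂ) (a c : Fin N → ℂ) (b : Fin M → ℂ)
    (hq : ‖q‖ < 1)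
    (hc : ∀ j n, qPoch q (c j) n ≠ 0)
    (hsum : ∀ y : Fin M → ℂ, (∀ i, ‖y i‖ < 1) →
      Summable (fun m : Fin M → ℕ =>
        ‖(∏ j, qPoch q (a j) (∑ i, m i) / qPoch q (c j) (∑ i, m i)) *
          (∏ i, qPoch q (b i) (m i) / qPoch q q (m i)) * ∏ i, y i ^ m i‖))
    (r s : Fin M) (hrs : r < s) (y : Fin M → ℂ) (hy : ∀ i, ‖y i‖ < 1) :
    y r * opAt q (b r) r (opAt q 1 s (qHyperF q a b c)) y
      = y s * opAt q (b s) s (opAt q 1 r (qHyperF q a b c)) y := by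
  classical
  have hrs' : r ≠ s := hrs.ne
  have hsr' : s ≠ r := hrs.ne'
  -- summability at every point of the polydisc
  have hS : ∀ z : Fin M → ℂ, (∀ i, ‖z i‖ < 1) →
      Summable (qTerm q a b c z) := by
    intro z hz
    refine Summable.of_norm ?_
    simpa [qTerm] using hsum z hz
  -- updated points stay in the polydisc
  have habs : ∀ (z : Fin M → ℂ), (∀ j, ‖z j‖ < 1) → ∀ (i j : Fin M),
      ‖Function.update z i (q * z i) j‖ < 1 := by
    intro z hz i j
    rcases eq_or_ne j i with rfl | h
    · simp only [Function.update_self, norm_mul]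
      simpa using mul_lt_mul'' hq (hz j) (norm_nonneg q) (norm_nonneg _)
    · simpa [Function.update_of_ne h] using hz j
  have hy2 : ∀ j, ‖(Function.update y s (q * y s)) j‖ < 1 := habs y hy s
  have hy3 : ∀ j, ‖(Function.update y r (q * y r)) j‖ < 1 := habs y hy r
  have hy4s : ∀ j, ‖(Function.update (Function.update y r (q * y r)) s
      (q * (Function.update y r (q * y r)) s)) j‖ < 1 := habs _ hy3 s
  have hy4r : ∀ j, ‖(Function.update (Function.update y s (q * y s)) r
      (q * (Function.update y s (q * y s)) r)) j‖ < 1 := habs _ hy2 r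
  set T : (Fin M → ℕ) → ℂ := qTerm q a b c y with hT
  have S1 : Summable T := hS y hy
  have Sfac : ∀ u v : Fin M, Summable (fun m => q ^ m u * T m) ∧
      Summable (fun m => q ^ m u * (q ^ m v * T m)) := by
    intro u v
    constructor
    · exact ((hS _ (habs y hy u)).congr (fun m => qTerm_update q a b c y u m))
    · refine ((hS _ (habs _ (habs y hy v) u)).congr (fun m => ?_))
      rw [qTerm_update q a b c _ u m, qTerm_update q a b c y v m]
  have S2 : Summable (fun m => q ^ m s * T m) := (Sfac s s).1
  have S3 : Summable (fun m => q ^ m r * T m) := (Sfac r r).1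
  have S4 : Summable (fun m => q ^ m s * (q ^ m r * T m)) := (Sfac s r).2
  -- expand the two sides as single tsums
  have expand : ∀ u v : Fin M, u ≠ v →
      y u * opAt q (b u) u (opAt q 1 v (qHyperF q a b c)) y
        = ∑' m, y u * ((T m - q ^ m v * T m) -
            b u * (q ^ m u * T m - q ^ m v * (q ^ m u * T m))) := by
    intro u v huv
    have hGy : qHyperF q a b c y = ∑' m, T m := qHyperF_eq_tsum_qTerm q a b c y
    have hGv : qHyperF q a b c (Function.update y v (q * y v))
        = ∑' m, q ^ m v * T m := by
      rw [qHyperF_eq_tsum_qTerm]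
      exact tsum_congr fun m => qTerm_update q a b c y v m
    have hGu : qHyperF q a b c (Function.update y u (q * y u))
        = ∑' m, q ^ m u * T m := by
      rw [qHyperF_eq_tsum_qTerm]
      exact tsum_congr fun m => qTerm_update q a b c y u m
    have hGuv : qHyperF q a b c (Function.update (Function.update y u (q * y u)) v
        (q * (Function.update y u (q * y u)) v))
        = ∑' m, q ^ m v * (q ^ m u * T m) := by
      rw [qHyperF_eq_tsum_qTerm]
      refine tsum_congr fun m => ?_
      rw [qTerm_update q a b c _ v m, qTerm_update q a b c y u m]
    have Su : Summable (fun m => q ^ m u * T m) := (Sfac u u).1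
    have Sv : Summable (fun m => q ^ m v * T m) := (Sfac v v).1
    have Suv : Summable (fun m => q ^ m v * (q ^ m u * T m)) := (Sfac v u).2
    simp only [opAt, qShiftAt, hGy, hGv, hGu, hGuv, one_mul]
    rw [← Summable.tsum_sub S1 Sv, ← Summable.tsum_sub Su Suv, ← tsum_mul_left (a := b u),
      ← Summable.tsum_sub ((S1.sub Sv)) (((Su.sub Suv)).mul_left (b u)),
      ← tsum_mul_left (a := y u)]
  rw [expand r s hrs', expand s r hsr']
  -- reindexing along m ↦ m + e_w
  have reindex : ∀ u v : Fin M, u ≠ v →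
      (∑' m, y u * ((T m - q ^ m v * T m) -
          b u * (q ^ m u * T m - q ^ m v * (q ^ m u * T m))))
        = ∑' m, y u * y v * (1 - b u * q ^ m u) * (1 - q ^ m v * b v) *
            (∏ j, (1 - q ^ (∑ i, m i) * a j) / (1 - q ^ (∑ i, m i) * c j)) * T m := by
    intro u v huv
    set f : (Fin M → ℕ) → ℂ := fun m =>
      y u * ((T m - q ^ m v * T m) -
        b u * (q ^ m u * T m - q ^ m v * (q ^ m u * T m))) with hf
    have hinj := update_succ_injective (M := M) v
    have hsupp : Function.support f ⊆
        Set.range (fun m : Fin M → ℕ => Function.update m v (m v + 1)) := by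
      intro m hm
      by_cases h0 : m v = 0
      · exfalso
        apply hm
        simp only [hf, h0, pow_zero, one_mul]
        ring
      · refine ⟨Function.update m v (m v - 1), ?_⟩
        funext i
        rcases eq_or_ne i v with rfl | hi
        · simp only [Function.update_self]
          omega
        · simp [Function.update_of_ne hi]
    rw [← hinj.tsum_eq hsupp]
    refine tsum_congr fun m => ?_
    have h1 : Function.update m v (m v + 1) u = m u := Function.update_of_ne huv _ _
    have h2 : Function.update m v (m v + 1) v = m v + 1 := Function.update_self _ _ _
    have key := qTerm_succ q a b c y hq v m
    simp only [hf, h1, h2, ← hT]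
    rw [pow_succ]
    linear_combination (y u * (1 - b u * q ^ m u)) * key
  rw [reindex r s hrs', reindex s r hsr']
  refine tsum_congr fun m => ?_
  ring
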